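/- Let H = θ Π P Πᵀ be an n×n symmetric matrix of rank K, where θ > 0, Π ∈ ℝ^{n×K}, and P ∈ ℝ^{K×K} is symmetric. If V ∈ ℝ^{n×K} is the matrix of orthonormal eigenvectors of H corresponding to its K nonzero eigenvalues, then there exists a matrix B ∈ ℝ^{K×K} such that V = Π B; moreover B Bᵀ = (Πᵀ Π)^{−1} whenever Πᵀ Π is invertible. -/

import Mathlib

open Matrix

/-- If `H = θ • Π P Πᵀ` has rank `K` with eigendecomposition `H = V D Vᵀ`,
`D` a diagonal matrix of nonzero eigenvalues and `VᵀV = I`, then there is `B` with `V = Π B`;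
moreover `B Bᵀ = (ΠᵀΠ)⁻¹` whenever `ΠᵀΠ` is invertible. -/
theorem simple_stmt1
    (n K : ℕ) (θ : ℝ) (hθ : 0 < θ)
    (Pi : Matrix (Fin n) (Fin K) ℝ) (P : Matrix (Fin K) (Fin K) ℝ)
    (hP : P.IsSymm)
    (H : Matrix (Fin n) (Fin n) ℝ)
    (hH : H = θ • (Pi * P * Pi.transpose))
    (hrank : H.rank = K)
    (V : Matrix (Fin n) (Fin K) ℝ) (d : Fin K → ℝ)
    (hd : ∀ k, d k ≠ 0)
    (hdecomp : H = V * Matrix.diagonal d * V.transpose)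
    (horth : V.transpose * V = 1) :
    ∃ B : Matrix (Fin K) (Fin K) ℝ,
      V = Pi * B ∧
        (IsUnit (Pi.transpose * Pi) → B * B.transpose = (Pi.transpose * Pi)⁻¹) := by
  set Dinv := Matrix.diagonal (fun k => (d k)⁻¹) with hDinv
  have hDD : Matrix.diagonal d * Dinv = 1 := by
    rw [hDinv, Matrix.diagonal_mul_diagonal]
    have : (fun k => d k * (d k)⁻¹) = fun _ => (1:ℝ) := by
      funext k; exact mul_inv_cancel₀ (hd k)
    rw [this, Matrix.diagonal_one]
  have hHV : H * V = V * Matrix.diagonal d := by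
    rw [hdecomp, Matrix.mul_assoc, Matrix.mul_assoc, horth, Matrix.mul_one]
  have hVeq : V = H * V * Dinv := by
    rw [hHV, Matrix.mul_assoc, hDD, Matrix.mul_one]
  set B := θ • (P * Pi.transpose * V * Dinv) with hB
  have hPiB : V = Pi * B := by
    have h1 : Pi * B = H * V * Dinv := by
      rw [hB, hH]
      simp only [Matrix.mul_smul, Matrix.smul_mul, Matrix.mul_assoc]
    rw [h1, ← hVeq]
  refine ⟨B, hPiB, ?_⟩
  · intro hunit
    have hBtMB : B.transpose * (Pi.transpose * Pi) * B = 1 := by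
      have := horth
      rw [hPiB] at this
      rw [Matrix.transpose_mul] at this
      rw [← this]
      simp only [Matrix.mul_assoc]
    have hdetB : IsUnit B.det := by
      have hdet := congrArg Matrix.det hBtMB
      simp only [Matrix.det_mul, Matrix.det_one] at hdet
      exact IsUnit.of_mul_eq_one _ (by
        rw [Matrix.det_transpose] at hdet
        linarith [hdet] : B.det * (B.det * (Pi.transpose * Pi).det) = 1)
    have hleft : (B.transpose * (Pi.transpose * Pi)) * B = 1 := hBtMB
    have hright : B * (B.transpose * (Pi.transpose * Pi)) = 1 :=
      mul_eq_one_comm.mp hleft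
    have hMright : (Pi.transpose * Pi) * (B * B.transpose) = 1 := by
      have : (B * B.transpose) * (Pi.transpose * Pi) = 1 := by
        rw [Matrix.mul_assoc]; exact hright
      exact mul_eq_one_comm.mp this
    exact (Matrix.inv_eq_right_inv hMright).symm
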